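/- Let λ : ℕ → ℂ have finite support, satisfy Σ_n |λ_n|² = 1, and satisfy λ_m ≠ 0 for some m ≥ 1 (i.e. |ξ⟩ = Σ_n λ_n|n⟩ is a finite superposition of Fock states other than a multiple of the vacuum, hence a non-classical state). For each k ∈ ℕ define η̃_k : ℕ → ℂ by η̃_k(n) = λ_{n+k} · 2^{-(n+k)/2} · (Nat.choose (n+k) k)^{1/2}. Then there exists η : ℕ → ℂ with Σ_n |η_n|² = 1 such that Σ_n conj(η_n)·η̃_{2k}(n) = 0 for all k ∈ ℕ, while Σ_{k=0}^∞ |Σ_n conj(η_n)·η̃_{2k+1}(n)|² > 0. (This is the core of the paper's Corollary: every finite-dimensional state begets a generalized NOON state that violates the GYNI inequality, since such an η yields GYNI value strictly greater than the one-way-signaling bound.) -/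

import Mathlib

open scoped BigOperators

/-- Core of the Corollary: for a normalized, finitely supported, non-classical
single-mode state (some `λ_m ≠ 0` with `m ≥ 1`), there is a normalized vector
`η` orthogonal to all even annihilated sequences `η̃_{2k}` but with nonzero
total overlap with the odd ones, so the generalized NOON state violates GYNI. -/
theorem finite_dimensional_state_gyni_violation
    (lam : ℕ → ℂ)
    (hfin : (Function.support lam).Finite)
    (hnorm : ∑' n : ℕ, ‖lam n‖ ^ 2 = 1)
    (hnc : ∃ m : ℕ, 1 ≤ m ∧ lam m ≠ 0)
    (eta : ℕ → ℕ → ℂ)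
    (heta : ∀ k n : ℕ, eta k n = lam (n + k) *
      (((2 : ℝ) ^ (-((n + k : ℕ) : ℝ) / 2) : ℝ) : ℂ) *
      ((Real.sqrt (Nat.choose (n + k) k : ℝ) : ℝ) : ℂ)) :
    ∃ η : ℕ → ℂ,
      (∑' n : ℕ, ‖η n‖ ^ 2 = 1) ∧
      (∀ k : ℕ, ∑' n : ℕ, (starRingEnd ℂ) (η n) * eta (2 * k) n = 0) ∧
      0 < ∑' k : ℕ, ‖∑' n : ℕ, (starRingEnd ℂ) (η n) * eta (2 * k + 1) n‖ ^ 2 := by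
  classical
  obtain ⟨m0, hm0, hlm0⟩ := hnc
  have hmem : m0 ∈ hfin.toFinset := by simpa using hlm0
  have hne : hfin.toFinset.Nonempty := ⟨m0, hmem⟩
  obtain ⟨p, hp⟩ : ∃ p, hfin.toFinset.max' hne = p + 1 := by
    refine ⟨hfin.toFinset.max' hne - 1, ?_⟩
    have h1 : m0 ≤ hfin.toFinset.max' hne := hfin.toFinset.le_max' _ hmem
    omega
  have hlamM : lam (p + 1) ≠ 0 := by
    have := hfin.toFinset.max'_mem hne
    rw [hp] at this
    simpa using this
  have htop : ∀ n, p + 1 < n → lam n = 0 := by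
    intro n hn
    by_contra h
    have := hfin.toFinset.le_max' n (by simpa using h)
    rw [hp] at this
    omega
  set A := eta 0 p with hA
  set B := eta 0 (p + 1) with hB
  have hBne : B ≠ 0 := by
    rw [hB, heta]
    refine mul_ne_zero (mul_ne_zero ?_ ?_) ?_
    · simpa using hlamM
    · exact_mod_cast ne_of_gt (Real.rpow_pos_of_pos two_pos _)
    · simp
  set r : ℝ := Real.sqrt (‖A‖ ^ 2 + ‖B‖ ^ 2) with hr
  have hrpos : 0 < r := by
    apply Real.sqrt_pos.mpr
    have h : 0 < ‖B‖ ^ 2 := pow_pos (norm_pos_iff.mpr hBne) 2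
    exact lt_of_lt_of_le h (le_add_of_nonneg_left (by positivity))
  have hrne : (r : ℂ) ≠ 0 := by exact_mod_cast ne_of_gt hrpos
  set η : ℕ → ℂ := fun n =>
    if n = p then (starRingEnd ℂ) B / r else if n = p + 1 then -((starRingEnd ℂ) A) / r else 0
    with hη
  have hηp : η p = (starRingEnd ℂ) B / r := by simp [hη]
  have hηp1 : η (p + 1) = -((starRingEnd ℂ) A) / r := by
    have h : p + 1 ≠ p := by omega
    simp [hη, h]
  have hpne : p ≠ p + 1 := by omega
  have hη0 : ∀ n, n ≠ p → n ≠ p + 1 → η n = 0 := by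
    intro n h1 h2; simp [hη, h1, h2]
  -- a general finite-support tsum reduction
  have hsum : ∀ f : ℕ → ℂ, ∑' n, (starRingEnd ℂ) (η n) * f n
      = (starRingEnd ℂ) (η p) * f p + (starRingEnd ℂ) (η (p + 1)) * f (p + 1) := by
    intro f
    rw [tsum_eq_sum (s := {p, p + 1}) (by
      intro n hn
      simp only [Finset.mem_insert, Finset.mem_singleton, not_or] at hn
      simp [hη0 n hn.1 hn.2])]
    rw [Finset.sum_pair hpne]
  refine ⟨η, ?_, ?_, ?_⟩
  · -- norm
    rw [tsum_eq_sum (s := {p, p + 1}) (by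
        intro n hn
        simp only [Finset.mem_insert, Finset.mem_singleton, not_or] at hn
        simp [hη0 n hn.1 hn.2]),
      Finset.sum_pair hpne, hηp, hηp1]
    have e1 : ‖(starRingEnd ℂ) B / (r : ℂ)‖ ^ 2 = ‖B‖ ^ 2 / r ^ 2 := by
      rw [norm_div, Complex.norm_conj, Complex.norm_real, Real.norm_eq_abs, abs_of_pos hrpos, div_pow]
    have e2 : ‖-((starRingEnd ℂ) A) / (r : ℂ)‖ ^ 2
        = ‖A‖ ^ 2 / r ^ 2 := by
      rw [norm_div, norm_neg, Complex.norm_conj, Complex.norm_real, Real.norm_eq_abs,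
        abs_of_pos hrpos, div_pow]
    rw [e1, e2]
    have hr2 : r ^ 2 = ‖A‖ ^ 2 + ‖B‖ ^ 2 := by
      rw [hr]; exact Real.sq_sqrt (by positivity)
    field_simp
    rw [hr2]; ring
  · -- even orthogonality
    intro k
    rw [hsum]
    rcases Nat.eq_zero_or_pos k with hk | hk
    · subst hk
      simp only [Nat.mul_zero]
      rw [hηp, hηp1, ← hA, ← hB]
      rw [map_div₀, map_div₀, Complex.conj_conj, map_neg, Complex.conj_conj,
        Complex.conj_ofReal]
      ring
    · have h1 : eta (2 * k) p = 0 := by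
        rw [heta]
        have : lam (p + 2 * k) = 0 := htop _ (by omega)
        simp [this]
      have h2 : eta (2 * k) (p + 1) = 0 := by
        rw [heta]
        have : lam (p + 1 + 2 * k) = 0 := htop _ (by omega)
        simp [this]
      simp [h1, h2]
  · -- odd positivity
    have hg : ∀ k : ℕ, k ≠ 0 →
        ‖∑' n : ℕ, (starRingEnd ℂ) (η n) * eta (2 * k + 1) n‖ ^ 2 = 0 := by
      intro k hk
      rw [hsum]
      have h1 : eta (2 * k + 1) p = 0 := by
        rw [heta]
        have : lam (p + (2 * k + 1)) = 0 := htop _ (by omega)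
        simp [this]
      have h2 : eta (2 * k + 1) (p + 1) = 0 := by
        rw [heta]
        have : lam (p + 1 + (2 * k + 1)) = 0 := htop _ (by omega)
        simp [this]
      simp [h1, h2]
    rw [tsum_eq_single 0 hg]
    have h2 : eta (2 * 0 + 1) (p + 1) = 0 := by
      rw [heta]
      have : lam (p + 1 + (2 * 0 + 1)) = 0 := htop _ (by omega)
      simp [this]
    have h1 : eta (2 * 0 + 1) p ≠ 0 := by
      rw [heta]
      refine mul_ne_zero (mul_ne_zero ?_ ?_) ?_
      · simpa using hlamM
      · exact_mod_cast ne_of_gt (Real.rpow_pos_of_pos two_pos _)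
      · have : (0 : ℝ) < Real.sqrt ((p + (2 * 0 + 1)).choose (2 * 0 + 1) : ℝ) := by
          apply Real.sqrt_pos.mpr
          have : 0 < (p + (2 * 0 + 1)).choose (2 * 0 + 1) := Nat.choose_pos (by omega)
          exact_mod_cast this
        exact_mod_cast ne_of_gt this
    have hval : (∑' n : ℕ, (starRingEnd ℂ) (η n) * eta (2 * 0 + 1) n) ≠ 0 := by
      rw [hsum, h2, hηp, map_div₀, Complex.conj_conj, Complex.conj_ofReal]
      simpa using mul_ne_zero (div_ne_zero hBne hrne) h1
    exact pow_pos (norm_pos_iff.mpr hval) 2
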